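/- Let (X, U, V, C, S) be a GSVD of the pair (A, B), and let V⊥ ∈ ℝ^{p×(p−n)} satisfy Vᵀ V⊥ = 0 and V⊥ᵀ V⊥ = I_{p−n}. Set Λ = S C⁻¹ and W′ = X C⁻¹. Define the augmented matrices B̃ = [[0, B], [Bᵀ, 0]] ∈ ℝ^{(p+n)×(p+n)} and Ã = [[I_p, 0], [0, AᵀA]] ∈ ℝ^{(p+n)×(p+n)}, the (p+n)×(p+n) block matrix Z = [[(1/√2)V, (1/√2)V, V⊥], [(1/√2)W′, −(1/√2)W′, 0]] (row blocks of sizes p and n, column blocks of sizes n, n and p−n), and the block-diagonal matrix Λ̃ = diag(Λ, −Λ, 0_{p−n}). Then B̃ Z = Ã Z Λ̃ and Zᵀ Ã Z = I_{p+n}. -/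

import Mathlib

open Matrix

lemma smul_fromRows' {m₁ m₂ n : Type*} (c : ℝ) (A : Matrix m₁ n ℝ) (B : Matrix m₂ n ℝ) :
    c • Matrix.fromRows A B = Matrix.fromRows (c • A) (c • B) := by
  ext i j; cases i <;> rfl

lemma smul_fromColumns' {m n₁ n₂ : Type*} (c : ℝ) (A : Matrix m n₁ ℝ) (B : Matrix m n₂ ℝ) :
    c • Matrix.fromCols A B = Matrix.fromCols (c • A) (c • B) := by
  ext i j; cases j <;> rfl

lemma fromColumns_add' {m n₁ n₂ : Type*} (A C : Matrix m n₁ ℝ) (B D : Matrix m n₂ ℝ) :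
    Matrix.fromCols A B + Matrix.fromCols C D = Matrix.fromCols (A + C) (B + D) := by
  ext i j; cases j <;> rfl

lemma fromRows_add' {m₁ m₂ n : Type*} (A C : Matrix m₁ n ℝ) (B D : Matrix m₂ n ℝ) :
    Matrix.fromRows A B + Matrix.fromRows C D = Matrix.fromRows (A + C) (B + D) := by
  ext i j; cases i <;> rfl

/-- GSVD of (A,B) gives the generalized eigendecomposition
`B̃ Z = Ã Z Λ̃` with `Zᵀ Ã Z = I` for the second augmented pair. -/
theorem stmt_1 {m n p : ℕ} (hmn : n ≤ m) (hpn : n ≤ p)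
    (A : Matrix (Fin m) (Fin n) ℝ) (B : Matrix (Fin p) (Fin n) ℝ)
    (X : Matrix (Fin n) (Fin n) ℝ)
    (U : Matrix (Fin m) (Fin n) ℝ) (V : Matrix (Fin p) (Fin n) ℝ)
    (a b : Fin n → ℝ)
    (hX : IsUnit X.det)
    (hU : Uᵀ * U = 1) (hV : Vᵀ * V = 1)
    (ha : ∀ i, 0 < a i) (hb : ∀ i, 0 < b i)
    (hab : ∀ i, a i ^ 2 + b i ^ 2 = 1)
    (hA : A = U * Matrix.diagonal a * X⁻¹)
    (hB : B = V * Matrix.diagonal b * X⁻¹)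
    (Vperp : Matrix (Fin p) (Fin (p - n)) ℝ)
    (hVp1 : Vᵀ * Vperp = 0) (hVp2 : Vperpᵀ * Vperp = 1)
    (Lam W' : Matrix (Fin n) (Fin n) ℝ)
    (hLam : Lam = Matrix.diagonal b * (Matrix.diagonal a)⁻¹)
    (hW' : W' = X * (Matrix.diagonal a)⁻¹)
    (Btilde Atilde : Matrix (Fin p ⊕ Fin n) (Fin p ⊕ Fin n) ℝ)
    (hBtilde : Btilde = Matrix.fromBlocks 0 B Bᵀ 0)
    (hAtilde : Atilde = Matrix.fromBlocks 1 0 0 (Aᵀ * A))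
    (Z : Matrix (Fin p ⊕ Fin n) ((Fin n ⊕ Fin n) ⊕ Fin (p - n)) ℝ)
    (hZ : Z = Matrix.fromBlocks
      (Matrix.fromCols ((Real.sqrt 2)⁻¹ • V) ((Real.sqrt 2)⁻¹ • V)) Vperp
      (Matrix.fromCols ((Real.sqrt 2)⁻¹ • W') (-((Real.sqrt 2)⁻¹ • W'))) 0)
    (Lamtilde : Matrix ((Fin n ⊕ Fin n) ⊕ Fin (p - n)) ((Fin n ⊕ Fin n) ⊕ Fin (p - n)) ℝ)
    (hLamtilde : Lamtilde = Matrix.fromBlocks (Matrix.fromBlocks Lam 0 0 (-Lam)) 0 0 0) :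
    Btilde * Z = Atilde * Z * Lamtilde ∧ Zᵀ * Atilde * Z = 1 := by
  have hDa : IsUnit (Matrix.diagonal a).det := by
    rw [det_diagonal]
    exact isUnit_iff_ne_zero.mpr (ne_of_gt (Finset.prod_pos fun i _ => ha i))
  have hDai : Matrix.diagonal a * (Matrix.diagonal a)⁻¹ = 1 := mul_nonsing_inv _ hDa
  have hXi : X⁻¹ * X = 1 := nonsing_inv_mul X hX
  have hc2 : (Real.sqrt 2)⁻¹ * (Real.sqrt 2)⁻¹ = (1:ℝ)/2 := by
    rw [← mul_inv, Real.mul_self_sqrt (by norm_num)]; norm_num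
  -- key facts
  have hAW : A * W' = U := by
    rw [hA, hW', Matrix.mul_assoc, ← Matrix.mul_assoc X⁻¹, hXi, Matrix.one_mul,
      Matrix.mul_assoc, hDai, Matrix.mul_one]
  have hBW : B * W' = V * Lam := by
    rw [hB, hW', hLam, Matrix.mul_assoc, ← Matrix.mul_assoc X⁻¹, hXi, Matrix.one_mul,
      Matrix.mul_assoc]
  have hcomm : Matrix.diagonal a * Matrix.diagonal b
      = Matrix.diagonal b * Matrix.diagonal a := by
    rw [diagonal_mul_diagonal, diagonal_mul_diagonal]
    exact congrArg Matrix.diagonal (funext fun i => mul_comm (a i) (b i))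
  have hDaLam : Matrix.diagonal a * Lam = Matrix.diagonal b := by
    rw [hLam, ← Matrix.mul_assoc, hcomm, Matrix.mul_assoc, hDai, Matrix.mul_one]
  have hAtU : Aᵀ * U = X⁻¹ᵀ * Matrix.diagonal a := by
    rw [hA, transpose_mul, transpose_mul, Matrix.mul_assoc, Matrix.mul_assoc, hU,
      Matrix.mul_one, diagonal_transpose]
  have hBtV' : Bᵀ * V = X⁻¹ᵀ * Matrix.diagonal b := by
    rw [hB, transpose_mul, transpose_mul, Matrix.mul_assoc, Matrix.mul_assoc, hV,
      Matrix.mul_one, diagonal_transpose]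
  have hBtV : Bᵀ * V = Aᵀ * A * W' * Lam := by
    rw [Matrix.mul_assoc (Aᵀ) A W', hAW, hAtU, Matrix.mul_assoc, hDaLam, hBtV']
  have hBtVp : Bᵀ * Vperp = 0 := by
    rw [hB, transpose_mul, transpose_mul, Matrix.mul_assoc, Matrix.mul_assoc, hVp1,
      Matrix.mul_zero, Matrix.mul_zero]
  have hWAAW : W'ᵀ * (Aᵀ * (A * W')) = 1 := by
    rw [hAW, ← Matrix.mul_assoc, ← transpose_mul, hAW, hU]
  have hVpV : Vperpᵀ * V = 0 := by
    have := congrArg transpose hVp1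
    rwa [transpose_mul, transpose_transpose, transpose_zero] at this
  subst hBtilde hAtilde hZ hLamtilde
  constructor
  · simp only [fromBlocks_multiply, Matrix.mul_fromCols, Matrix.zero_mul, Matrix.mul_zero,
      Matrix.one_mul, Matrix.mul_one, add_zero, zero_add, Matrix.mul_smul, Matrix.mul_neg,
      Matrix.neg_mul, hBW, hBtVp, Matrix.fromCols_mul_fromBlocks, hBtV]
    simp [Matrix.smul_mul, Matrix.mul_assoc]
  · simp only [fromBlocks_transpose, transpose_fromCols, transpose_smul, transpose_neg,
      transpose_zero, fromBlocks_multiply, Matrix.fromRows_mul, Matrix.fromRows_mul_fromCols,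
      Matrix.mul_fromCols, Matrix.smul_mul, Matrix.mul_smul, Matrix.neg_mul, Matrix.mul_neg,
      Matrix.zero_mul, Matrix.mul_zero, Matrix.one_mul, Matrix.mul_one, add_zero, zero_add,
      hV, hVp1, hVp2, hVpV, Matrix.mul_assoc, hWAAW, smul_zero, neg_zero, neg_neg,
      smul_smul, hc2]
    simp only [smul_fromRows', smul_fromColumns', Matrix.fromCols_neg, Matrix.fromRows_neg,
      smul_neg, neg_neg, Matrix.fromCols_fromRows_eq_fromBlocks, fromColumns_add',
      fromRows_add', ← Matrix.fromBlocks_add, smul_smul, hc2]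
    have h1 : ((1:ℝ)/2) • (1 : Matrix (Fin n) (Fin n) ℝ) + ((1:ℝ)/2) • 1 = 1 := by
      rw [← add_smul]; norm_num
    rw [Matrix.fromBlocks_add, h1, add_neg_cancel, Matrix.fromRows_zero, Matrix.fromCols_zero,
      Matrix.fromBlocks_one, Matrix.fromBlocks_one]
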